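/- Fixed points of the quantum embedding of Glauber dynamics. In the Glauber setup, a density matrix ρ on 𝒜 satisfies 𝓛_Λ(ρ) = 0 if and only if ρ is diagonal in the computational basis, ρ = Σ_{σ∈Ω} p(σ)|σ⟩⟨σ|, with p a probability distribution on Ω that is stationary for the classical Glauber generator, i.e. Σ_{x∈Λ} c(x,σ^x) p(σ^x) = p(σ) Σ_{x∈Λ} c(x,σ) for every σ ∈ Ω (equivalently, p is a stationary distribution of the Markov generator (Q_Λ f)(σ) = Σ_{x∈Λ} c(x,σ)(f(σ^x) − f(σ))). -/

import Mathlib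

open scoped BigOperators Kronecker ComplexOrder
open Matrix

noncomputable section

namespace DissipStab

variable {ι κ κ' : Type*}

/-- The operator (`∞→∞`) norm of a matrix, via its action on Euclidean space. -/
def opNorm [Fintype ι] [DecidableEq ι] (M : Matrix ι ι ℂ) : ℝ :=
  ⨆ x : {x : EuclideanSpace ℂ ι // ‖x‖ ≤ 1}, ‖Matrix.toEuclideanLin M x.1‖

/-- The trace (Schatten `1`) norm of a matrix. -/
def traceNorm [Fintype ι] [DecidableEq ι] (M : Matrix ι ι ℂ) : ℝ :=
  (((Matrix.isHermitian_conjTranspose_mul_self M).eigenvectorUnitary.1 *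
      Matrix.diagonal ((fun t : ℝ => ((Real.sqrt t : ℝ) : ℂ)) ∘
        (Matrix.isHermitian_conjTranspose_mul_self M).eigenvalues) *
      (star (Matrix.isHermitian_conjTranspose_mul_self M).eigenvectorUnitary :
        Matrix ι ι ℂ)).trace).re

/-- The amplification `T ⊗ id` of a superoperator to a tensor factor. -/
def tensorId [Fintype κ] [Fintype κ'] [DecidableEq κ] [DecidableEq κ']
    (T : Matrix κ κ ℂ →ₗ[ℂ] Matrix κ κ ℂ) :
    Matrix (κ × κ') (κ × κ') ℂ →ₗ[ℂ] Matrix (κ × κ') (κ × κ') ℂ where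
  toFun M := Matrix.of fun p q => T (Matrix.of fun k l => M (k, p.2) (l, q.2)) p.1 q.1
  map_add' M N := by
    ext p q
    show T (Matrix.of fun k l => (M + N) (k, p.2) (l, q.2)) p.1 q.1 = _
    rw [show (Matrix.of fun k l => (M + N) (k, p.2) (l, q.2))
        = (Matrix.of fun k l => M (k, p.2) (l, q.2)) +
          (Matrix.of fun k l => N (k, p.2) (l, q.2)) from rfl, map_add]
    rfl
  map_smul' c M := by
    ext p q
    show T (Matrix.of fun k l => (c • M) (k, p.2) (l, q.2)) p.1 q.1 = _
    rw [show (Matrix.of fun k l => (c • M) (k, p.2) (l, q.2))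
        = c • (Matrix.of fun k l => M (k, p.2) (l, q.2)) from rfl, _root_.map_smul]
    rfl

/-- The adjoint (dual) of a superoperator with respect to the trace pairing
`⟨A, B⟩ = tr (Aᴴ B)`. -/
def dualMap [Fintype ι] [DecidableEq ι]
    (T : Matrix ι ι ℂ →ₗ[ℂ] Matrix ι ι ℂ) : Matrix ι ι ℂ →ₗ[ℂ] Matrix ι ι ℂ where
  toFun A := Matrix.of fun i j =>
    (starRingEnd ℂ) (Matrix.trace (Aᴴ * T (Matrix.single i j 1)))
  map_add' A B := by
    ext i j
    simp [Matrix.conjTranspose_add, Matrix.add_mul, Matrix.trace_add, Matrix.add_apply]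
  map_smul' c A := by
    ext i j
    simp [Matrix.conjTranspose_smul, Matrix.smul_mul, Matrix.trace_smul, Matrix.smul_apply,
      mul_comm]

/-- The completely bounded `1→1` norm of a superoperator. -/
def cbNorm1 [Fintype ι] [DecidableEq ι] (T : Matrix ι ι ℂ →ₗ[ℂ] Matrix ι ι ℂ) : ℝ :=
  ⨆ n : ℕ, ⨆ X : {X : Matrix (ι × Fin n) (ι × Fin n) ℂ // traceNorm X ≤ 1},
    traceNorm (tensorId T X.1)

/-- The completely bounded `∞→∞` norm of a superoperator. -/
def cbNormInf [Fintype ι] [DecidableEq ι] (T : Matrix ι ι ℂ →ₗ[ℂ] Matrix ι ι ℂ) : ℝ :=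
  ⨆ n : ℕ, ⨆ X : {X : Matrix (ι × Fin n) (ι × Fin n) ℂ // opNorm X ≤ 1},
    opNorm (tensorId T X.1)

/-- The exponential `e^L` of a superoperator. -/
def expSuper [Fintype ι] [DecidableEq ι]
    (L : Matrix ι ι ℂ →ₗ[ℂ] Matrix ι ι ℂ) : Matrix ι ι ℂ →ₗ[ℂ] Matrix ι ι ℂ :=
  Matrix.toLin (Matrix.stdBasis ℂ ι ι) (Matrix.stdBasis ℂ ι ι)
    (NormedSpace.exp
      (LinearMap.toMatrix (Matrix.stdBasis ℂ ι ι) (Matrix.stdBasis ℂ ι ι) L))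

/-- A density matrix. -/
def IsDensity [Fintype ι] [DecidableEq ι] (ρ : Matrix ι ι ℂ) : Prop :=
  ρ.PosSemidef ∧ ρ.trace = 1

/-- A superoperator in GKLS (Lindblad) form. -/
def IsLindbladian [Fintype ι] [DecidableEq ι]
    (𝓛 : Matrix ι ι ℂ →ₗ[ℂ] Matrix ι ι ℂ) : Prop :=
  ∃ (H : Matrix ι ι ℂ) (n : ℕ) (L : Fin n → Matrix ι ι ℂ), H.IsHermitian ∧
    ∀ ρ, 𝓛 ρ = Complex.I • (ρ * H - H * ρ) +
      ∑ j, (L j * ρ * (L j)ᴴ -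
        (1/2 : ℂ) • ((L j)ᴴ * L j * ρ + ρ * ((L j)ᴴ * L j)))

/-- `P` is the spectral projection of `L` associated with the set `S` of eigenvalues:
it commutes with `L`, is idempotent, acts as the identity on all generalized eigenspaces
with eigenvalue in `S`, and kills all generalized eigenspaces with eigenvalue outside `S`. -/
def IsSpectralProjOn [Fintype ι] [DecidableEq ι]
    (L P : Matrix ι ι ℂ →ₗ[ℂ] Matrix ι ι ℂ) (S : Set ℂ) : Prop :=
  P ∘ₗ L = L ∘ₗ P ∧ P ∘ₗ P = P ∧
  (∀ μ ∈ S, ∀ v ∈ Module.End.maxGenEigenspace (L : Module.End ℂ (Matrix ι ι ℂ)) μ, P v = v) ∧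
  (∀ μ ∉ S, ∀ v ∈ Module.End.maxGenEigenspace (L : Module.End ℂ (Matrix ι ι ℂ)) μ, P v = 0)

/-- The contraction coefficient `η` of a CPTP map `T` relative to the projection `P`
onto the periodic subspace: `η = ½ sup_ρ ‖T ρ - T (P ρ)‖₁`, the supremum running
over density matrices. -/
def eta [Fintype ι] [DecidableEq ι]
    (T P : Matrix ι ι ℂ →ₗ[ℂ] Matrix ι ι ℂ) : ℝ :=
  (1/2) * ⨆ ρ : {ρ : Matrix ι ι ℂ // IsDensity ρ}, traceNorm (T ρ.1 - T (P ρ.1))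

/-- An exponentially decaying function. -/
def ExpDecay (g : ℕ → ℝ) : Prop := ∃ c : ℝ, 0 < c ∧ ∀ r : ℕ, g r ≤ Real.exp (-c * r)

/-- A polynomially bounded function. -/
def PolyBound (p : ℕ → ℝ) : Prop := ∃ (C : ℝ) (k : ℕ), ∀ n : ℕ, p n ≤ C * ((n : ℝ) + 1) ^ k

/- ## Glauber dynamics setup -/

/-- A site of the cubic lattice `ℤ^D`. -/
abbrev Site (D : ℕ) := Fin D → ℤ

variable {D : ℕ}

/-- The (ℓ∞) distance between two lattice sites. -/
def distS (u v : Site D) : ℕ := Finset.univ.sup fun i => (u i - v i).natAbs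

/-- Classical spin configurations on `Λ` (spin values `±1` encoded as `Bool`). -/
abbrev GCfg (Λ : Finset (Site D)) := ↥Λ → Bool

/-- The configuration `σ^x` obtained from `σ` by flipping the spin at `x`. -/
def flipAt {Λ : Finset (Site D)} (σ : GCfg Λ) (x : ↥Λ) : GCfg Λ :=
  Function.update σ x (!σ x)

/-- The Hamming distance between two configurations. -/
def hamming {Λ : Finset (Site D)} (α β : GCfg Λ) : ℕ :=
  (Finset.univ.filter fun x => α x ≠ β x).card

/-- The sites of `Λ` at distance at most `r` from `x`. -/
def locBall (Λ : Finset (Site D)) (r : ℕ) (x : ↥Λ) : Finset ↥Λ :=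
  Finset.univ.filter fun y => distS (x : Site D) (y : Site D) ≤ r

/-- The transition rates `c(x, ·)` depend only on the spins in the ball `b_x(r)`. -/
def FiniteRangeRates (Λ : Finset (Site D)) (r : ℕ) (c : ↥Λ → GCfg Λ → ℝ) : Prop :=
  ∀ x σ τ, (∀ y ∈ locBall Λ r x, σ y = τ y) → c x σ = c x τ

/-- Local configurations on the ball `b_x(r) ∩ Λ`. -/
abbrev LocCfg (Λ : Finset (Site D)) (r : ℕ) (x : ↥Λ) := ↥(locBall Λ r x) → Bool

/-- Canonical extension of a local configuration to `Λ`. -/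
def extendLoc {Λ : Finset (Site D)} {r : ℕ} (x : ↥Λ) (η : LocCfg Λ r x) : GCfg Λ :=
  fun y => if h : y ∈ locBall Λ r x then η ⟨y, h⟩ else false

/-- The Lindblad operator `L_{x,η} = √(c(x,η)) |η^x⟩⟨η| ⊗ 𝟙`. -/
def Lop {Λ : Finset (Site D)} (r : ℕ) (c : ↥Λ → GCfg Λ → ℝ) (x : ↥Λ)
    (η : LocCfg Λ r x) : Matrix (GCfg Λ) (GCfg Λ) ℂ :=
  Matrix.of fun σ τ =>
    if (∀ y : ↥(locBall Λ r x), τ y.1 = η y) ∧ σ = flipAt τ x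
    then (Real.sqrt (c x (extendLoc x η)) : ℂ) else 0

/-- Conjugation superoperator `ρ ↦ L ρ R`. -/
def conjAct {ι : Type*} [Fintype ι] [DecidableEq ι] (L R : Matrix ι ι ℂ) :
    Matrix ι ι ℂ →ₗ[ℂ] Matrix ι ι ℂ :=
  (LinearMap.mulLeft ℂ L).comp (LinearMap.mulRight ℂ R)

/-- The anticommutator superoperator `ρ ↦ ½ {K, ρ}`. -/
def anticommHalf {ι : Type*} [Fintype ι] [DecidableEq ι] (K : Matrix ι ι ℂ) :
    Matrix ι ι ℂ →ₗ[ℂ] Matrix ι ι ℂ :=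
  (1/2 : ℂ) • (LinearMap.mulLeft ℂ K + LinearMap.mulRight ℂ K)

/-- The diagonal matrix `K = ∑_σ (∑_x c(x,σ)) |σ⟩⟨σ|`. -/
def Kmat {Λ : Finset (Site D)} (c : ↥Λ → GCfg Λ → ℝ) : Matrix (GCfg Λ) (GCfg Λ) ℂ :=
  Matrix.diagonal fun σ => ((∑ x : ↥Λ, c x σ : ℝ) : ℂ)

/-- The quantum embedding of the classical Glauber dynamics:
`𝓛_Λ(ρ) = ∑_x ∑_η L_{x,η} ρ L_{x,η}† − ½{K, ρ}`. -/
def glauberGen {Λ : Finset (Site D)} (r : ℕ) (c : ↥Λ → GCfg Λ → ℝ) :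
    Matrix (GCfg Λ) (GCfg Λ) ℂ →ₗ[ℂ] Matrix (GCfg Λ) (GCfg Λ) ℂ :=
  (∑ x : ↥Λ, ∑ η : LocCfg Λ r x, conjAct (Lop r c x η) (Lop r c x η)ᴴ)
    - anticommHalf (Kmat c)

/-- The projector `|η⟩⟨η| ⊗ 𝟙` onto the local configuration `η`, weighted by `c(x,η)`. -/
def etaProjMat {Λ : Finset (Site D)} (r : ℕ) (c : ↥Λ → GCfg Λ → ℝ) (x : ↥Λ)
    (η : LocCfg Λ r x) : Matrix (GCfg Λ) (GCfg Λ) ℂ :=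
  Matrix.diagonal fun σ =>
    if ∀ y : ↥(locBall Λ r x), σ y.1 = η y then (c x (extendLoc x η) : ℂ) else 0

/-- The local Lindblad term `𝓛_{x,η}(ρ) = L_{x,η} ρ L_{x,η}† − ½{c(x,η)|η⟩⟨η|⊗𝟙, ρ}`. -/
def locLind {Λ : Finset (Site D)} (r : ℕ) (c : ↥Λ → GCfg Λ → ℝ) (x : ↥Λ)
    (η : LocCfg Λ r x) : Matrix (GCfg Λ) (GCfg Λ) ℂ →ₗ[ℂ] Matrix (GCfg Λ) (GCfg Λ) ℂ :=
  conjAct (Lop r c x η) (Lop r c x η)ᴴ - anticommHalf (etaProjMat r c x η)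

/-- The projection `P_{x,i} = (|i⟩⟨i|)_x ⊗ 𝟙` of site `x` onto spin value `i`. -/
def projSpin {Λ : Finset (Site D)} (x : ↥Λ) (i : Bool) : Matrix (GCfg Λ) (GCfg Λ) ℂ :=
  Matrix.diagonal fun σ => if σ x = i then 1 else 0

/-- The uniform dephasing generator
`𝒟(ρ) = γ ∑_x ∑_i P_{x,i} ρ P_{x,i} − γ|Λ| ρ`. -/
def dephasing {Λ : Finset (Site D)} (γ : ℝ) :
    Matrix (GCfg Λ) (GCfg Λ) ℂ →ₗ[ℂ] Matrix (GCfg Λ) (GCfg Λ) ℂ :=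
  (γ : ℂ) • ((∑ x : ↥Λ, ∑ i : Bool, conjAct (projSpin x i) (projSpin x i))
    - (Λ.card : ℂ) • LinearMap.id)

/-- The projection `𝒞` onto diagonal matrices (in the computational basis). -/
def diagProj {Λ : Finset (Site D)} :
    Matrix (GCfg Λ) (GCfg Λ) ℂ →ₗ[ℂ] Matrix (GCfg Λ) (GCfg Λ) ℂ where
  toFun ρ := Matrix.diagonal fun σ => ρ σ σ
  map_add' ρ τ := by
    ext i j
    by_cases h : i = j <;> simp [Matrix.diagonal_apply, h, Matrix.add_apply]
  map_smul' a ρ := by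
    ext i j
    by_cases h : i = j <;> simp [Matrix.diagonal_apply, h, Matrix.smul_apply]

section AuxGlauber
variable {D : ℕ} {Λ : Finset (Site D)}


lemma flipAt_apply_self (σ : GCfg Λ) (x : ↥Λ) : flipAt σ x x = !σ x := by
  simp [flipAt]

lemma flipAt_apply_ne (σ : GCfg Λ) {x y : ↥Λ} (h : y ≠ x) : flipAt σ x y = σ y := by
  simp [flipAt, Function.update_of_ne h]

lemma flipAt_flipAt (σ : GCfg Λ) (x : ↥Λ) : flipAt (flipAt σ x) x = σ := by
  funext y
  by_cases h : y = x
  · subst h; simp [flipAt]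
  · simp [flipAt, Function.update_of_ne h]

lemma flipAt_inj {σ τ : GCfg Λ} {x : ↥Λ} (h : flipAt σ x = flipAt τ x) : σ = τ := by
  have := congrArg (fun ρ => flipAt ρ x) h
  simpa [flipAt_flipAt] using this

lemma mem_locBall_self (r : ℕ) (x : ↥Λ) : x ∈ locBall Λ r x := by
  simp only [locBall, Finset.mem_filter, Finset.mem_univ, true_and]
  have : distS (x : Site D) (x : Site D) = 0 :=
    Nat.le_zero.mp (Finset.sup_le fun i _ => by simp)
  omega

lemma agree_flip (r : ℕ) (x : ↥Λ) (α β : GCfg Λ) :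
    (∀ y ∈ locBall Λ r x, flipAt α x y = flipAt β x y) ↔
      ∀ y ∈ locBall Λ r x, α y = β y := by
  have key : ∀ γ δ : GCfg Λ, (∀ y ∈ locBall Λ r x, γ y = δ y) →
      ∀ y ∈ locBall Λ r x, flipAt γ x y = flipAt δ x y := by
    intro γ δ h y hy
    by_cases hxy : y = x
    · subst hxy; rw [flipAt_apply_self, flipAt_apply_self, h y hy]
    · rw [flipAt_apply_ne _ hxy, flipAt_apply_ne _ hxy]; exact h y hy
  constructor
  · intro h
    have := key _ _ h
    simpa [flipAt_flipAt] using this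
  · exact key α β

lemma hamming_flip {α β : GCfg Λ} {x : ↥Λ} (h : α x ≠ β x) :
    hamming (flipAt α x) β = hamming α β - 1 := by
  have hset : (Finset.univ.filter fun y => flipAt α x y ≠ β y)
      = (Finset.univ.filter fun y => α y ≠ β y).erase x := by
    ext y
    by_cases hxy : y = x
    · subst hxy
      simp [flipAt_apply_self, Finset.mem_erase]
      cases hb : α y <;> cases hb2 : β y <;> simp_all
    · simp [flipAt_apply_ne _ hxy, Finset.mem_erase, hxy]
  rw [hamming, hset, Finset.card_erase_of_mem (by simpa using h)]
  rfl

lemma flip_reach (q : GCfg Λ → Prop) (hq : ∀ σ x, q σ → q (flipAt σ x)) :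
    ∀ σ τ : GCfg Λ, q σ → q τ := by
  suffices h : ∀ (n : ℕ) (σ τ : GCfg Λ), hamming σ τ = n → q σ → q τ by
    intro σ τ; exact h (hamming σ τ) σ τ rfl
  intro n
  induction n with
  | zero =>
    intro σ τ hd hσ
    have : σ = τ := by
      funext y
      by_contra hy
      have : y ∈ Finset.univ.filter fun z => σ z ≠ τ z := by simpa using hy
      have h2 := Finset.card_pos.mpr ⟨y, this⟩
      rw [hamming] at hd
      omega
    exact this ▸ hσ
  | succ n ih =>
    intro σ τ hd hσ
    have hne : (Finset.univ.filter fun z => σ z ≠ τ z).Nonempty := by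
      apply Finset.card_pos.mp
      rw [hamming] at hd
      omega
    obtain ⟨x, hx⟩ := hne
    have hx' : σ x ≠ τ x := by simpa using hx
    refine ih (flipAt σ x) τ ?_ (hq σ x hσ)
    rw [hamming_flip hx', hd]
    omega
lemma c_extend {r : ℕ} {c : ↥Λ → GCfg Λ → ℝ} (hrange : FiniteRangeRates Λ r c)
    (x : ↥Λ) (σ : GCfg Λ) :
    c x (extendLoc x (fun y : ↥(locBall Λ r x) => σ y.1)) = c x σ := by
  apply hrange
  intro y hy
  simp [extendLoc, hy]

lemma Lop_apply_eq (r : ℕ) (c : ↥Λ → GCfg Λ → ℝ) (x : ↥Λ) (η : LocCfg Λ r x)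
    (α σ : GCfg Λ) :
    Lop r c x η α σ =
      if σ = flipAt α x ∧ ((fun y : ↥(locBall Λ r x) => flipAt α x y.1) = η)
      then (Real.sqrt (c x (extendLoc x η)) : ℂ) else 0 := by
  simp only [Lop, Matrix.of_apply]
  apply if_congr _ rfl rfl
  constructor
  · rintro ⟨h1, rfl⟩
    refine ⟨(flipAt_flipAt σ x).symm, ?_⟩
    funext y
    simpa [flipAt_flipAt] using h1 y
  · rintro ⟨rfl, rfl⟩
    exact ⟨fun y => rfl, (flipAt_flipAt α x).symm⟩

lemma sum_eta_apply (r : ℕ) (c : ↥Λ → GCfg Λ → ℝ) (hc : ∀ x σ, 0 ≤ c x σ)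
    (hrange : FiniteRangeRates Λ r c) (x : ↥Λ)
    (ρ : Matrix (GCfg Λ) (GCfg Λ) ℂ) (α β : GCfg Λ) :
    (∑ η : LocCfg Λ r x, conjAct (Lop r c x η) (Lop r c x η)ᴴ ρ) α β
    = if (∀ y ∈ locBall Λ r x, α y = β y)
      then ((c x (flipAt α x) : ℝ) : ℂ) * ρ (flipAt α x) (flipAt β x) else 0 := by
  have hconj : ∀ (η : LocCfg Λ r x) (τ : GCfg Λ),
      (Lop r c x η)ᴴ τ β = if τ = flipAt β x ∧
        ((fun y : ↥(locBall Λ r x) => flipAt β x y.1) = η)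
        then (Real.sqrt (c x (extendLoc x η)) : ℂ) else 0 := by
    intro η τ
    rw [Matrix.conjTranspose_apply, Lop_apply_eq]
    simp [apply_ite (starRingEnd ℂ), Complex.conj_ofReal]
  have hmul : ∀ η : LocCfg Λ r x,
      (conjAct (Lop r c x η) (Lop r c x η)ᴴ ρ) α β
      = if ((fun y : ↥(locBall Λ r x) => flipAt α x y.1) = η) ∧
          ((fun y : ↥(locBall Λ r x) => flipAt β x y.1) = η)
        then (Real.sqrt (c x (extendLoc x η)) : ℂ) ^ 2 * ρ (flipAt α x) (flipAt β x)
        else 0 := by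
    intro η
    show (Lop r c x η * (ρ * (Lop r c x η)ᴴ)) α β = _
    rw [Matrix.mul_apply]
    rw [Fintype.sum_eq_single (flipAt α x) (fun σ hσ => by
      rw [Lop_apply_eq, if_neg (by tauto), zero_mul])]
    rw [Lop_apply_eq]
    rw [Matrix.mul_apply]
    rw [Fintype.sum_eq_single (flipAt β x) (fun τ hτ => by
      rw [hconj, if_neg (by tauto), mul_zero])]
    rw [hconj]
    by_cases h1 : ((fun y : ↥(locBall Λ r x) => flipAt α x y.1) = η) <;>
      by_cases h2 : ((fun y : ↥(locBall Λ r x) => flipAt β x y.1) = η) <;>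
      simp [h1, h2] <;> ring
  rw [Matrix.sum_apply]
  simp only [hmul]
  rw [Fintype.sum_eq_single (fun y : ↥(locBall Λ r x) => flipAt α x y.1)
    (fun η hη => by rw [if_neg (by tauto)])]
  by_cases h : (fun y : ↥(locBall Λ r x) => flipAt β x y.1)
      = (fun y : ↥(locBall Λ r x) => flipAt α x y.1)
  · have hcond : ∀ y ∈ locBall Λ r x, α y = β y := by
      rw [← agree_flip r x]
      intro y hy
      exact (congrFun h ⟨y, hy⟩).symm
    rw [if_pos ⟨rfl, h⟩, if_pos hcond]
    congr 1
    norm_cast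
    rw [Real.sq_sqrt (hc x _), c_extend hrange x (flipAt α x)]
  · have hcond : ¬ ∀ y ∈ locBall Λ r x, α y = β y := by
      rw [← agree_flip r x]
      intro hcon
      exact h (funext fun y => (hcon y.1 y.2).symm)
    rw [if_neg (by tauto), if_neg hcond]

lemma gen_apply (r : ℕ) (c : ↥Λ → GCfg Λ → ℝ) (hc : ∀ x σ, 0 ≤ c x σ)
    (hrange : FiniteRangeRates Λ r c)
    (ρ : Matrix (GCfg Λ) (GCfg Λ) ℂ) (α β : GCfg Λ) :
    glauberGen r c ρ α β =
      (∑ x : ↥Λ, if (∀ y ∈ locBall Λ r x, α y = β y)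
        then ((c x (flipAt α x) : ℝ) : ℂ) * ρ (flipAt α x) (flipAt β x) else 0)
      - (1/2 : ℂ) * (((∑ x : ↥Λ, c x α : ℝ) : ℂ) + ((∑ x : ↥Λ, c x β : ℝ) : ℂ))
          * ρ α β := by
  show ((∑ x : ↥Λ, ∑ η : LocCfg Λ r x, conjAct (Lop r c x η) (Lop r c x η)ᴴ) ρ
      - anticommHalf (Kmat c) ρ) α β = _
  rw [Matrix.sub_apply]
  congr 1
  · rw [LinearMap.sum_apply, Matrix.sum_apply]
    exact Finset.sum_congr rfl fun x _ => by
      rw [← sum_eta_apply r c hc hrange x ρ α β, LinearMap.sum_apply]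
  · show ((1/2 : ℂ) • (Kmat c * ρ + ρ * Kmat c)) α β = _
    simp only [Matrix.smul_apply, Matrix.add_apply, Kmat, Matrix.diagonal_mul,
      Matrix.mul_diagonal, smul_eq_mul]
    ring

lemma psd_entry_bound {ι : Type*} [Fintype ι] [DecidableEq ι] {ρ : Matrix ι ι ℂ}
    (hρ : ρ.PosSemidef) (α β : ι) :
    ‖ρ α β‖ ≤ Real.sqrt ((ρ α α).re) * Real.sqrt ((ρ β β).re) := by
  obtain ⟨B, rfl⟩ : ∃ B : Matrix ι ι ℂ, ρ = Bᴴ * B := by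
    open MatrixOrder in
    obtain ⟨B, hB⟩ := CStarAlgebra.nonneg_iff_eq_star_mul_self.mp hρ.nonneg
    exact ⟨B, hB⟩
  have hdiag : ∀ γ, ((Bᴴ * B) γ γ).re = ∑ i, ‖B i γ‖ ^ 2 := by
    intro γ
    rw [Matrix.mul_apply, Complex.re_sum]
    refine Finset.sum_congr rfl fun i _ => ?_
    rw [Matrix.conjTranspose_apply, mul_comm, RCLike.star_def, Complex.mul_conj,
      Complex.ofReal_re, ← Complex.sq_norm]
  calc ‖(Bᴴ * B) α β‖
      ≤ ∑ i, ‖B i α‖ * ‖B i β‖ := by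
        rw [Matrix.mul_apply]
        refine (norm_sum_le _ _).trans_eq ?_
        refine Finset.sum_congr rfl fun i _ => ?_
        rw [Matrix.conjTranspose_apply, RCLike.star_def, norm_mul, Complex.norm_conj]
    _ ≤ Real.sqrt (∑ i, ‖B i α‖ ^ 2) *
        Real.sqrt (∑ i, ‖B i β‖ ^ 2) :=
        Real.sum_mul_le_sqrt_mul_sqrt _ _ _
    _ = Real.sqrt ((Bᴴ * B) α α).re * Real.sqrt ((Bᴴ * B) β β).re := by
        rw [hdiag, hdiag]

end AuxGlauber

/-- **Fixed points of the quantum embedding of Glauber dynamics.** A density matrix `ρ`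
satisfies `𝓛_Λ(ρ) = 0` if and only if `ρ` is diagonal in the computational basis,
`ρ = ∑_σ p(σ)|σ⟩⟨σ|`, with `p` a probability distribution which is stationary for the
classical Glauber generator. -/
theorem glauber_fixed_points
    {D : ℕ} (Λ : Finset (Site D)) (r : ℕ) (c : ↥Λ → GCfg Λ → ℝ)
    (cm cM : ℝ) (hcm : 0 < cm)
    (hbound : ∀ (x : ↥Λ) (σ : GCfg Λ), cm ≤ c x σ ∧ c x σ ≤ cM)
    (hrange : FiniteRangeRates Λ r c)
    (ρ : Matrix (GCfg Λ) (GCfg Λ) ℂ) (hρ : IsDensity ρ) :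
    glauberGen r c ρ = 0 ↔
      ∃ p : GCfg Λ → ℝ, (∀ σ, 0 ≤ p σ) ∧ (∑ σ, p σ = 1) ∧
        ρ = Matrix.diagonal (fun σ => (p σ : ℂ)) ∧
        ∀ σ : GCfg Λ, ∑ x : ↥Λ, c x (flipAt σ x) * p (flipAt σ x) =
          p σ * ∑ x : ↥Λ, c x σ := by
  have hc0 : ∀ (x : ↥Λ) (σ : GCfg Λ), 0 ≤ c x σ := fun x σ => hcm.le.trans (hbound x σ).1
  constructor
  · intro h
    set p : GCfg Λ → ℝ := fun σ => (ρ σ σ).re with hpdef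
    have hdiagρ : ∀ σ, ρ σ σ = ((p σ : ℝ) : ℂ) := fun σ =>
      (hρ.1.1.coe_re_apply_self σ).symm
    have hp0 : ∀ σ, 0 ≤ p σ := by
      intro σ
      have h2 : (0 : ℂ) ≤ ρ σ σ := by
        exact hρ.1.diag_nonneg
      simpa [hpdef] using (Complex.le_def.mp h2).1
    have hsum : ∑ σ, p σ = 1 := by
      have ht := hρ.2
      have h1 : ((∑ σ, p σ : ℝ) : ℂ) = 1 := by
        push_cast
        rw [show (∑ σ, ((p σ : ℝ) : ℂ)) = ∑ σ, ρ σ σ from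
          Finset.sum_congr rfl fun σ _ => (hdiagρ σ).symm]
        simpa [Matrix.trace, Matrix.diag] using ht
      exact_mod_cast h1
    have hent : ∀ α β : GCfg Λ, (∑ x : ↥Λ, if (∀ y ∈ locBall Λ r x, α y = β y)
        then ((c x (flipAt α x) : ℝ) : ℂ) * ρ (flipAt α x) (flipAt β x) else 0)
        = (1/2 : ℂ) * (((∑ x : ↥Λ, c x α : ℝ) : ℂ) + ((∑ x : ↥Λ, c x β : ℝ) : ℂ))
          * ρ α β := by
      intro α β
      have h0 : glauberGen r c ρ α β = 0 := by rw [h]; rfl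
      rw [gen_apply r c hc0 hrange] at h0
      exact sub_eq_zero.mp h0
    have hstat : ∀ σ : GCfg Λ, ∑ x : ↥Λ, c x (flipAt σ x) * p (flipAt σ x)
        = p σ * ∑ x : ↥Λ, c x σ := by
      intro σ
      have h0 := hent σ σ
      rw [Finset.sum_congr rfl (fun x _ => if_pos (fun y _ => rfl))] at h0
      have h1 : ((∑ x : ↥Λ, c x (flipAt σ x) * p (flipAt σ x) : ℝ) : ℂ)
          = ((p σ * ∑ x : ↥Λ, c x σ : ℝ) : ℂ) := by
        push_cast
        calc ∑ x : ↥Λ, (c x (flipAt σ x) : ℂ) * (p (flipAt σ x) : ℂ)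
            = ∑ x : ↥Λ, ((c x (flipAt σ x) : ℝ) : ℂ) * ρ (flipAt σ x) (flipAt σ x) :=
              Finset.sum_congr rfl fun x _ => by rw [hdiagρ]
          _ = (1/2 : ℂ) * (((∑ x : ↥Λ, c x σ : ℝ) : ℂ) + ((∑ x : ↥Λ, c x σ : ℝ) : ℂ))
                * ρ σ σ := h0
          _ = (p σ : ℂ) * ∑ x : ↥Λ, (c x σ : ℂ) := by rw [hdiagρ σ]; push_cast; ring
      exact_mod_cast h1
    have hppos : ∀ σ, 0 < p σ := by
      by_contra hcon
      push_neg at hcon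
      obtain ⟨σ0, hσ0⟩ := hcon
      have hz0 : p σ0 = 0 := le_antisymm hσ0 (hp0 σ0)
      have hflipz : ∀ (σ : GCfg Λ) (x : ↥Λ), p σ = 0 → p (flipAt σ x) = 0 := by
        intro σ x hσ
        have hs := hstat σ
        rw [hσ, zero_mul] at hs
        have hterm := (Finset.sum_eq_zero_iff_of_nonneg (fun y _ =>
          mul_nonneg (hc0 y _) (hp0 _))).mp hs x (Finset.mem_univ x)
        have hcpos : 0 < c x (flipAt σ x) := lt_of_lt_of_le hcm (hbound x _).1
        rcases mul_eq_zero.mp hterm with h' | h'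
        · exact absurd h' hcpos.ne'
        · exact h'
      have hall : ∀ τ, p τ = 0 := fun τ =>
        flip_reach (fun σ => p σ = 0) hflipz σ0 τ hz0
      rw [Finset.sum_eq_zero (fun τ _ => hall τ)] at hsum
      norm_num at hsum
    have hoff : ∀ α' β' : GCfg Λ, α' ≠ β' → ρ α' β' = 0 := by
      intro α' β' hne'
      set S : Finset (GCfg Λ × GCfg Λ) := Finset.univ.filter (fun pq => pq.1 ≠ pq.2)
        with hSdef
      have hSne : S.Nonempty := ⟨(α', β'), by simp [hSdef, hne']⟩
      obtain ⟨mpr, hmpS, hmax⟩ := Finset.exists_max_image S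
        (fun pq => ‖ρ pq.1 pq.2‖ / Real.sqrt (p pq.1 * p pq.2)) hSne
      set α0 := mpr.1 with hα0
      set β0 := mpr.2 with hβ0
      have hne0 : α0 ≠ β0 := by
        have h' := hmpS
        simp only [hSdef, Finset.mem_filter, Finset.mem_univ, true_and] at h'
        exact h'
      set M := ‖ρ α0 β0‖ / Real.sqrt (p α0 * p β0) with hMdef
      have hsqrt_pos : ∀ γ δ : GCfg Λ, 0 < Real.sqrt (p γ * p δ) := fun γ δ =>
        Real.sqrt_pos.mpr (mul_pos (hppos γ) (hppos δ))
      have hb : ∀ γ δ : GCfg Λ, γ ≠ δ →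
          ‖ρ γ δ‖ ≤ M * Real.sqrt (p γ * p δ) := by
        intro γ δ hgd
        have hmx := hmax (γ, δ) (by simp [hSdef, hgd])
        rw [div_le_iff₀ (hsqrt_pos γ δ)] at hmx
        exact hmx
      rcases le_or_gt M 0 with hM0 | hMpos
      · have h1 : ‖ρ α' β'‖ ≤ 0 := by
          have h2 := hb α' β' hne'
          have h3 : M * Real.sqrt (p α' * p β') ≤ 0 :=
            mul_nonpos_of_nonpos_of_nonneg hM0 (Real.sqrt_nonneg _)
          linarith
        exact norm_eq_zero.mp (le_antisymm h1 (norm_nonneg _))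
      · exfalso
        set kA : ℝ := ∑ x : ↥Λ, c x α0 with hkA
        set kB : ℝ := ∑ x : ↥Λ, c x β0 with hkB
        have hkA0 : (0:ℝ) ≤ kA := Finset.sum_nonneg fun x _ => hc0 x _
        have hkB0 : (0:ℝ) ≤ kB := Finset.sum_nonneg fun x _ => hc0 x _
        have hmeq : ‖ρ α0 β0‖ = M * Real.sqrt (p α0 * p β0) := by
          rw [hMdef, div_mul_cancel₀ _ (hsqrt_pos α0 β0).ne']
        have heq := hent α0 β0
        have hABs : ‖(1/2 : ℂ) * (((kA : ℝ) : ℂ) + ((kB : ℝ) : ℂ)) * ρ α0 β0‖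
            = (1/2) * (kA + kB) * ‖ρ α0 β0‖ := by
          have hnn : (0:ℝ) ≤ 1/2 * (kA + kB) := by linarith
          rw [show ((1/2 : ℂ) * (((kA : ℝ) : ℂ) + ((kB : ℝ) : ℂ)))
              = (((1/2 * (kA + kB) : ℝ)) : ℂ) by push_cast; ring, norm_mul,
            Complex.norm_real, Real.norm_eq_abs, abs_of_nonneg hnn]
        obtain ⟨x0, hx0⟩ := Function.ne_iff.mp hne0
        have hcond0 : ¬ (∀ y ∈ locBall Λ r x0, α0 y = β0 y) := fun hcon =>
          hx0 (hcon x0 (mem_locBall_self r x0))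
        set A : ℝ := ∑ x : ↥Λ, if (∀ y ∈ locBall Λ r x, α0 y = β0 y)
          then c x (flipAt α0 x) * p (flipAt α0 x) else 0 with hAdef
        set B : ℝ := ∑ x : ↥Λ, if (∀ y ∈ locBall Λ r x, α0 y = β0 y)
          then c x (flipAt β0 x) * p (flipAt β0 x) else 0 with hBdef
        have hA0 : 0 ≤ A := Finset.sum_nonneg fun x _ => by
          split_ifs with h'
          · exact mul_nonneg (hc0 _ _) (hp0 _)
          · exact le_rfl
        have hB0 : 0 ≤ B := Finset.sum_nonneg fun x _ => by
          split_ifs with h'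
          · exact mul_nonneg (hc0 _ _) (hp0 _)
          · exact le_rfl
        have hAlt : A < kA * p α0 := by
          have hlt : A < ∑ x : ↥Λ, c x (flipAt α0 x) * p (flipAt α0 x) := by
            rw [hAdef]
            refine Finset.sum_lt_sum (fun i _ => ?_) ⟨x0, Finset.mem_univ x0, ?_⟩
            · split_ifs with h'
              · exact le_rfl
              · exact mul_nonneg (hc0 _ _) (hp0 _)
            · rw [if_neg hcond0]
              exact mul_pos (lt_of_lt_of_le hcm (hbound x0 _).1) (hppos _)
          calc A < ∑ x : ↥Λ, c x (flipAt α0 x) * p (flipAt α0 x) := hlt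
            _ = p α0 * kA := hstat α0
            _ = kA * p α0 := mul_comm _ _
        have hBlt : B < kB * p β0 := by
          have hcond0' : ¬ (∀ y ∈ locBall Λ r x0, β0 y = α0 y) := fun hcon =>
            hx0 ((hcon x0 (mem_locBall_self r x0)).symm)
          have hlt : B < ∑ x : ↥Λ, c x (flipAt β0 x) * p (flipAt β0 x) := by
            rw [hBdef]
            refine Finset.sum_lt_sum (fun i _ => ?_) ⟨x0, Finset.mem_univ x0, ?_⟩
            · split_ifs with h'
              · exact le_rfl
              · exact mul_nonneg (hc0 _ _) (hp0 _)
            · rw [if_neg hcond0]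
              exact mul_pos (lt_of_lt_of_le hcm (hbound x0 _).1) (hppos _)
          calc B < ∑ x : ↥Λ, c x (flipAt β0 x) * p (flipAt β0 x) := hlt
            _ = p β0 * kB := hstat β0
            _ = kB * p β0 := mul_comm _ _
        have hCS : (∑ x : ↥Λ, (if (∀ y ∈ locBall Λ r x, α0 y = β0 y)
              then Real.sqrt (c x (flipAt α0 x) * p (flipAt α0 x)) else 0)
            * (if (∀ y ∈ locBall Λ r x, α0 y = β0 y)
              then Real.sqrt (c x (flipAt β0 x) * p (flipAt β0 x)) else 0))
            ≤ Real.sqrt A * Real.sqrt B := by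
          rw [hAdef, hBdef]
          have hcs := Real.sum_sqrt_mul_sqrt_le (Finset.univ)
            (f := fun x : ↥Λ => if (∀ y ∈ locBall Λ r x, α0 y = β0 y)
              then c x (flipAt α0 x) * p (flipAt α0 x) else 0)
            (g := fun x : ↥Λ => if (∀ y ∈ locBall Λ r x, α0 y = β0 y)
              then c x (flipAt β0 x) * p (flipAt β0 x) else 0)
            (fun x => by
              split_ifs with h'
              · exact mul_nonneg (hc0 _ _) (hp0 _)
              · exact le_rfl)
            (fun x => by
              split_ifs with h'
              · exact mul_nonneg (hc0 _ _) (hp0 _)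
              · exact le_rfl)
          simpa [apply_ite Real.sqrt, Real.sqrt_zero] using hcs
        have hterm : ∀ x : ↥Λ, (if (∀ y ∈ locBall Λ r x, α0 y = β0 y)
            then c x (flipAt α0 x) * ‖ρ (flipAt α0 x) (flipAt β0 x)‖ else 0)
            ≤ M * ((if (∀ y ∈ locBall Λ r x, α0 y = β0 y)
              then Real.sqrt (c x (flipAt α0 x) * p (flipAt α0 x)) else 0)
            * (if (∀ y ∈ locBall Λ r x, α0 y = β0 y)
              then Real.sqrt (c x (flipAt β0 x) * p (flipAt β0 x)) else 0)) := by
          intro x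
          split_ifs with hcond
          · have hceq : c x (flipAt α0 x) = c x (flipAt β0 x) :=
              hrange x _ _ ((agree_flip r x α0 β0).mpr hcond)
            have hflipne : flipAt α0 x ≠ flipAt β0 x := fun hf => hne0 (flipAt_inj hf)
            have e1 : Real.sqrt (c x (flipAt α0 x) * p (flipAt α0 x))
                = Real.sqrt (c x (flipAt α0 x)) * Real.sqrt (p (flipAt α0 x)) :=
              Real.sqrt_mul (hc0 x _) _
            have e2 : Real.sqrt (c x (flipAt β0 x) * p (flipAt β0 x))
                = Real.sqrt (c x (flipAt α0 x)) * Real.sqrt (p (flipAt β0 x)) := by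
              rw [← hceq]
              exact Real.sqrt_mul (hc0 x _) _
            have e3 : Real.sqrt (c x (flipAt α0 x)) * Real.sqrt (c x (flipAt α0 x))
                = c x (flipAt α0 x) := Real.mul_self_sqrt (hc0 x _)
            have hrhs : Real.sqrt (c x (flipAt α0 x) * p (flipAt α0 x)) *
                Real.sqrt (c x (flipAt β0 x) * p (flipAt β0 x))
                = c x (flipAt α0 x) *
                  Real.sqrt (p (flipAt α0 x) * p (flipAt β0 x)) := by
              rw [e1, e2, Real.sqrt_mul (hp0 _)]
              linear_combination (Real.sqrt (p (flipAt α0 x))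
                * Real.sqrt (p (flipAt β0 x))) * e3
            rw [hrhs]
            have hbb := hb _ _ hflipne
            calc c x (flipAt α0 x) * ‖ρ (flipAt α0 x) (flipAt β0 x)‖
                ≤ c x (flipAt α0 x) *
                  (M * Real.sqrt (p (flipAt α0 x) * p (flipAt β0 x))) :=
                  mul_le_mul_of_nonneg_left hbb (hc0 x _)
              _ = M * (c x (flipAt α0 x) *
                  Real.sqrt (p (flipAt α0 x) * p (flipAt β0 x))) := by ring
          · simp
        have habs_le : (1/2) * (kA + kB) * ‖ρ α0 β0‖
            ≤ M * (Real.sqrt A * Real.sqrt B) := by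
          rw [← hABs, ← heq]
          calc ‖∑ x : ↥Λ, if (∀ y ∈ locBall Λ r x, α0 y = β0 y)
                then ((c x (flipAt α0 x) : ℝ) : ℂ) * ρ (flipAt α0 x) (flipAt β0 x) else 0‖
              ≤ ∑ x : ↥Λ, ‖if (∀ y ∈ locBall Λ r x, α0 y = β0 y)
                then ((c x (flipAt α0 x) : ℝ) : ℂ) * ρ (flipAt α0 x) (flipAt β0 x) else 0‖ :=
                norm_sum_le _ _
            _ = ∑ x : ↥Λ, if (∀ y ∈ locBall Λ r x, α0 y = β0 y)
                then c x (flipAt α0 x) * ‖ρ (flipAt α0 x) (flipAt β0 x)‖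
                else 0 := by
                refine Finset.sum_congr rfl fun x _ => ?_
                split_ifs with h'
                · rw [norm_mul, Complex.norm_real, Real.norm_eq_abs, abs_of_nonneg (hc0 x _)]
                · exact norm_zero
            _ ≤ ∑ x : ↥Λ, M * ((if (∀ y ∈ locBall Λ r x, α0 y = β0 y)
                then Real.sqrt (c x (flipAt α0 x) * p (flipAt α0 x)) else 0)
                * (if (∀ y ∈ locBall Λ r x, α0 y = β0 y)
                then Real.sqrt (c x (flipAt β0 x) * p (flipAt β0 x)) else 0)) :=
                Finset.sum_le_sum fun x _ => hterm x
            _ = M * ∑ x : ↥Λ, ((if (∀ y ∈ locBall Λ r x, α0 y = β0 y)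
                then Real.sqrt (c x (flipAt α0 x) * p (flipAt α0 x)) else 0)
                * (if (∀ y ∈ locBall Λ r x, α0 y = β0 y)
                then Real.sqrt (c x (flipAt β0 x) * p (flipAt β0 x)) else 0)) :=
                (Finset.mul_sum _ _ _).symm
            _ ≤ M * (Real.sqrt A * Real.sqrt B) :=
                mul_le_mul_of_nonneg_left hCS hMpos.le
        have hstep : Real.sqrt A * Real.sqrt B
            < Real.sqrt (kA * p α0) * Real.sqrt (kB * p β0) :=
          mul_lt_mul'' (Real.sqrt_lt_sqrt hA0 hAlt) (Real.sqrt_lt_sqrt hB0 hBlt)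
            (Real.sqrt_nonneg _) (Real.sqrt_nonneg _)
        have hfin : Real.sqrt (kA * p α0) * Real.sqrt (kB * p β0)
            ≤ (1/2) * (kA + kB) * Real.sqrt (p α0 * p β0) := by
          rw [Real.sqrt_mul hkA0, Real.sqrt_mul hkB0, Real.sqrt_mul (hp0 α0)]
          have hgm : Real.sqrt kA * Real.sqrt kB ≤ 1/2 * (kA + kB) := by
            nlinarith [Real.sq_sqrt hkA0, Real.sq_sqrt hkB0,
              sq_nonneg (Real.sqrt kA - Real.sqrt kB), Real.sqrt_nonneg kA,
              Real.sqrt_nonneg kB]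
          nlinarith [hgm, Real.sqrt_nonneg (p α0), Real.sqrt_nonneg (p β0),
            mul_nonneg (Real.sqrt_nonneg (p α0)) (Real.sqrt_nonneg (p β0)),
            Real.sqrt_nonneg kA, Real.sqrt_nonneg kB,
            mul_nonneg (Real.sqrt_nonneg kA) (Real.sqrt_nonneg kB)]
        have hfinal : (1/2) * (kA + kB) * ‖ρ α0 β0‖
            < (1/2) * (kA + kB) * ‖ρ α0 β0‖ :=
          calc (1/2) * (kA + kB) * ‖ρ α0 β0‖
              ≤ M * (Real.sqrt A * Real.sqrt B) := habs_le
            _ < M * (Real.sqrt (kA * p α0) * Real.sqrt (kB * p β0)) :=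
                mul_lt_mul_of_pos_left hstep hMpos
            _ ≤ M * ((1/2) * (kA + kB) * Real.sqrt (p α0 * p β0)) :=
                mul_le_mul_of_nonneg_left hfin hMpos.le
            _ = (1/2) * (kA + kB) * (M * Real.sqrt (p α0 * p β0)) := by ring
            _ = (1/2) * (kA + kB) * ‖ρ α0 β0‖ := by rw [← hmeq]
        exact lt_irrefl _ hfinal
    refine ⟨p, hp0, hsum, ?_, hstat⟩
    ext γ δ
    by_cases hgd : γ = δ
    · subst hgd
      rw [Matrix.diagonal_apply_eq]
      exact hdiagρ γ
    · rw [Matrix.diagonal_apply_ne _ hgd]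
      exact hoff γ δ hgd
  · rintro ⟨p, hp0, hsum, rfl, hstat⟩
    ext α β
    rw [gen_apply r c hc0 hrange, Matrix.zero_apply]
    by_cases hab : α = β
    · subst hab
      simp only [Matrix.diagonal_apply_eq]
      rw [Finset.sum_congr rfl (fun x _ => if_pos (by intro y _; trivial))]
      rw [sub_eq_zero]
      calc ∑ x : ↥Λ, ((c x (flipAt α x) : ℝ) : ℂ) * ((p (flipAt α x) : ℝ) : ℂ)
          = ((∑ x : ↥Λ, c x (flipAt α x) * p (flipAt α x) : ℝ) : ℂ) := by push_cast; rfl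
        _ = ((p α * ∑ x : ↥Λ, c x α : ℝ) : ℂ) := by rw [hstat α]
        _ = (1/2 : ℂ) * (((∑ x : ↥Λ, c x α : ℝ) : ℂ) + ((∑ x : ↥Λ, c x α : ℝ) : ℂ))
              * ((p α : ℝ) : ℂ) := by push_cast; ring
    · rw [Matrix.diagonal_apply_ne _ hab, mul_zero, sub_zero]
      refine Finset.sum_eq_zero fun x _ => ?_
      split_ifs with hcond
      · rw [Matrix.diagonal_apply_ne, mul_zero]
        intro hflip
        exact hab (flipAt_inj hflip)
      · rfl

end DissipStab
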